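/- Let R and B be finite types, b : R → B a function, and h : R → R an involution without fixed points. Assume that for every β in the range of b, the fiber {t ∈ R : b(t) = β} has at least 3 elements. If λ : R → ℤ satisfies λ(s) + λ(h s) = Σ_{t : b(h t) = b(s)} λ(t) for every s ∈ R, then λ(s) + λ(h s) = 0 for every s ∈ R. -/
import Mathlib


/-- **Vanishing of `μ` (core counting argument of Lemma (connected)):**
if every nonempty fiber of `b` has at least three elements and
`λ(s) + λ(h s) = Σ_{t : b(h t) = b(s)} λ(t)` for all `s`, then
`λ(s) + λ(h s) = 0` for all `s`. -/
theorem stmt_11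
    {R B : Type*} [Fintype R] [Fintype B] [DecidableEq B]
    (b : R → B) (h : R → R)
    (hh : ∀ t, h (h t) = t) (hfix : ∀ t, h t ≠ t)
    (hdeg : ∀ β ∈ Set.range b, 3 ≤ (Finset.univ.filter fun t => b t = β).card)
    (lam : R → ℤ)
    (hlam : ∀ s : R, lam s + lam (h s) =
      ∑ t ∈ Finset.univ.filter fun t => b (h t) = b s, lam t) :
    ∀ s : R, lam s + lam (h s) = 0 := by
  classical
  set T : B → ℤ := fun β => ∑ t ∈ Finset.univ.filter fun t => b (h t) = β, lam t with hTdef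
  have hlamT : ∀ s, lam s + lam (h s) = T (b s) := hlam
  have e : R ≃ R := ⟨h, h, hh, hh⟩
  have hTalt : ∀ β, T β = ∑ u ∈ Finset.univ.filter (fun u => b u = β), lam (h u) := by
    intro β
    refine Finset.sum_equiv (⟨h, h, hh, hh⟩ : R ≃ R) ?_ ?_
    · intro t; simp
    · intro t ht; simp [hh]
  -- the adjacency relation on B
  set r : B → B → Prop := fun β β' => ∃ u, b u = β ∧ b (h u) = β' with hrdef
  have hTedge : ∀ u, T (b u) = T (b (h u)) := by
    intro u
    rw [← hlamT u, ← hlamT (h u), hh u]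
    ring
  have hTconst : ∀ β β', Relation.EqvGen r β β' → T β = T β' := by
    intro β β' hgen
    induction hgen with
    | rel x y hxy => obtain ⟨u, rfl, rfl⟩ := hxy; exact hTedge u
    | refl => rfl
    | symm _ _ _ ih => exact ih.symm
    | trans _ _ _ _ _ ih1 ih2 => exact ih1.trans ih2
  have hrange : ∀ β β', Relation.EqvGen r β β' → β = β' ∨ (β ∈ Set.range b ∧ β' ∈ Set.range b) := by
    intro β β' hgen
    induction hgen with
    | rel x y hxy => obtain ⟨u, rfl, rfl⟩ := hxy; exact Or.inr ⟨⟨u, rfl⟩, ⟨h u, rfl⟩⟩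
    | refl => exact Or.inl rfl
    | symm _ _ _ ih => rcases ih with h1 | h1; exact Or.inl h1.symm; exact Or.inr ⟨h1.2, h1.1⟩
    | trans x y z _ _ ih1 ih2 =>
        rcases ih1 with h1 | h1
        · rcases ih2 with h2 | h2
          · exact Or.inl (h1.trans h2)
          · exact Or.inr ⟨h1 ▸ h2.1, h2.2⟩
        · rcases ih2 with h2 | h2
          · exact Or.inr ⟨h1.1, h2 ▸ h1.2⟩
          · exact Or.inr ⟨h1.1, h2.2⟩
  have hgenstep : ∀ u, Relation.EqvGen r (b u) (b (h u)) := fun u => Relation.EqvGen.rel _ _ ⟨u, rfl, rfl⟩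
  -- fiberwise identity
  have hST : ∀ β, (∑ t ∈ Finset.univ.filter (fun t => b t = β), lam t) + T β
      = ((Finset.univ.filter fun t => b t = β).card : ℤ) * T β := by
    intro β
    have h1 : ∑ u ∈ Finset.univ.filter (fun u => b u = β), (lam u + lam (h u))
        = (∑ t ∈ Finset.univ.filter (fun t => b t = β), lam t) + T β := by
      rw [Finset.sum_add_distrib, hTalt β]
    have h2 : ∑ u ∈ Finset.univ.filter (fun u => b u = β), (lam u + lam (h u))
        = ((Finset.univ.filter fun t => b t = β).card : ℤ) * T β := by
      rw [Finset.sum_congr rfl (fun u hu => ?_), Finset.sum_const, nsmul_eq_mul]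
      have hb : b u = β := by simpa using hu
      rw [hlamT u, hb]
    rw [← h1, h2]
  intro s
  set c : ℤ := T (b s) with hc
  set C : Finset B := Finset.univ.filter (fun β => Relation.EqvGen r β (b s)) with hC
  set U : Finset R := Finset.univ.filter (fun u => Relation.EqvGen r (b u) (b s)) with hU
  have hmemC : ∀ β, β ∈ C ↔ Relation.EqvGen r β (b s) := by intro β; simp [hC]
  have hmemU : ∀ u, u ∈ U ↔ Relation.EqvGen r (b u) (b s) := by intro u; simp [hU]
  have hUh : ∀ u, u ∈ U ↔ Relation.EqvGen r (b (h u)) (b s) := by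
    intro u
    rw [hmemU]
    constructor
    · intro hu; exact Relation.EqvGen.trans _ _ _ (Relation.EqvGen.symm _ _ (hgenstep u)) hu
    · intro hu; exact Relation.EqvGen.trans _ _ _ (hgenstep u) hu
  -- sum of S over C
  have keyS : ∑ β ∈ C, (∑ t ∈ Finset.univ.filter (fun t => b t = β), lam t)
      = ∑ u ∈ U, lam u := by
    rw [← Finset.sum_fiberwise_of_maps_to (g := b) (fun u hu => (hmemC (b u)).2 ((hmemU u).1 hu)) lam]
    refine Finset.sum_congr rfl fun β hβ => ?_
    refine Finset.sum_congr ?_ (fun _ _ => rfl)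
    ext t
    simp only [Finset.mem_filter, Finset.mem_univ, true_and, hmemU]
    constructor
    · intro ht; exact ⟨ht ▸ (hmemC β).1 hβ, ht⟩
    · exact fun ht => ht.2
  have keyT : ∑ β ∈ C, T β = ∑ u ∈ U, lam u := by
    rw [← Finset.sum_fiberwise_of_maps_to (g := fun u => b (h u))
        (fun u hu => (hmemC (b (h u))).2 ((hUh u).1 hu)) lam]
    refine Finset.sum_congr rfl fun β hβ => ?_
    refine Finset.sum_congr ?_ (fun _ _ => rfl)
    ext t
    simp only [Finset.mem_filter, Finset.mem_univ, true_and, hmemU]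
    constructor
    · intro ht
      refine ⟨?_, ht⟩
      have := (hUh t).2 (ht ▸ (hmemC β).1 hβ)
      exact (hmemU t).1 this
    · exact fun ht => ht.2
  have hTc : ∀ β ∈ C, T β = c := fun β hβ => hTconst _ _ ((hmemC β).1 hβ)
  -- sum the fiberwise identity over C
  have hsum : (∑ u ∈ U, lam u) + (∑ u ∈ U, lam u)
      = (∑ β ∈ C, ((Finset.univ.filter fun t => b t = β).card : ℤ)) * c := by
    nth_rewrite 1 [← keyS]
    rw [← keyT, ← Finset.sum_add_distrib, Finset.sum_mul]
    refine Finset.sum_congr rfl fun β hβ => ?_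
    rw [hST β, hTc β hβ]
  have hsum2 : ∑ u ∈ U, lam u = (C.card : ℤ) * c := by
    rw [← keyT]
    rw [Finset.sum_congr rfl hTc, Finset.sum_const, nsmul_eq_mul]
  have hbound : ∀ β ∈ C, (3 : ℤ) ≤ ((Finset.univ.filter fun t => b t = β).card : ℤ) := by
    intro β hβ
    have hgen := (hmemC β).1 hβ
    have : β ∈ Set.range b := by
      rcases hrange _ _ hgen with h1 | h1
      · exact h1 ▸ ⟨s, rfl⟩
      · exact h1.1
    exact_mod_cast hdeg β this
  have hcard : (1 : ℤ) ≤ (C.card : ℤ) := by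
    have : b s ∈ C := (hmemC (b s)).2 (Relation.EqvGen.refl _)
    have := Finset.card_pos.2 ⟨b s, this⟩
    exact_mod_cast this
  have hge : (3 : ℤ) * C.card ≤ ∑ β ∈ C, ((Finset.univ.filter fun t => b t = β).card : ℤ) := by
    calc (3 : ℤ) * C.card = ∑ _β ∈ C, (3 : ℤ) := by
          rw [Finset.sum_const, nsmul_eq_mul]; ring
      _ ≤ _ := Finset.sum_le_sum hbound
  -- conclude c = 0
  have hkey : ((∑ β ∈ C, ((Finset.univ.filter fun t => b t = β).card : ℤ)) - 2 * C.card) * c = 0 := by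
    rw [sub_mul]
    rw [hsum2] at hsum
    linarith [hsum]
  have hfac : (0 : ℤ) < (∑ β ∈ C, ((Finset.univ.filter fun t => b t = β).card : ℤ)) - 2 * C.card := by
    linarith
  have hc0 : c = 0 := by
    rcases mul_eq_zero.1 hkey with h1 | h1
    · exact absurd h1 (by linarith)
    · exact h1
  rw [hlamT s, ← hc, hc0]
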